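/- arXiv:2101.07711 — 2 statements merged into one kernel-verified Lean document; each statement's English description precedes it below -/
import Mathlib

section
/- Resource bisimilarity ≃ is transitive: if r₁ ≃ r₂ and r₂ ≃ r₃ then r₁ ≃ r₃; concretely, the composition relation {(r₁,r₃) | ∃ r₂, r₁ ≃ r₂ ∧ r₂ ≃ r₃} is a resource bisimulation. -/
/-- A labeled Petri net: places `P`, transitions `T`, action labels `Act`. -/
structure LPN (P T Act : Type) where
  pre : T → P → ℕ
  post : T → P → ℕ
  lab : T → Act

variable {P T Act : Type}

/-- Firing relation: `M` fires `t` yielding `M'`. -/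
def Fires (N : LPN P T Act) (M : P → ℕ) (t : T) (M' : P → ℕ) : Prop :=
  N.pre t ≤ M ∧ M' = fun p => M p - N.pre t p + N.post t p

/-- `R` satisfies the (ordinary) transfer property w.r.t. `R'`. -/
def Transfer (N : LPN P T Act) (R R' : (P → ℕ) → (P → ℕ) → Prop) : Prop :=
  ∀ M₁ M₂, R M₁ M₂ → ∀ t M₁', Fires N M₁ t M₁' →
    ∃ u M₂', N.lab u = N.lab t ∧ Fires N M₂ u M₂' ∧ R' M₁' M₂'

/-- `R` is a bisimulation. -/
def IsBisim (N : LPN P T Act) (R : (P → ℕ) → (P → ℕ) → Prop) : Prop :=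
  Transfer N R R ∧ Transfer N (fun a b => R b a) (fun a b => R b a)

/-- Bisimilarity `∼`. -/
def Bisim (N : LPN P T Act) (M₁ M₂ : P → ℕ) : Prop :=
  ∃ R, IsBisim N R ∧ R M₁ M₂

/-- A congruence on markings: an equivalence compatible with addition. -/
def IsCongruence (ρ : (P → ℕ) → (P → ℕ) → Prop) : Prop :=
  Equivalence ρ ∧ ∀ r₁ r₂ s, ρ r₁ r₂ → ρ (r₁ + s) (r₂ + s)

/-- Resource similarity `≈`. -/
def ResSim (N : LPN P T Act) (r s : P → ℕ) : Prop :=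
  ∀ w, Bisim N (r + w) (s + w)

/-- `R` satisfies the resource transfer property w.r.t. `R'`. -/
def ResTransfer (N : LPN P T Act) (R R' : (P → ℕ) → (P → ℕ) → Prop) : Prop :=
  ∀ r s, R r s → ∀ t r', Fires N (fun p => r p + (N.pre t p - r p)) t r' →
    ∃ u s', N.lab u = N.lab t ∧
      Fires N (fun p => s p + (N.pre t p - r p)) u s' ∧ R' r' s'

/-- `R` is a resource bisimulation. -/
def IsResBisim (N : LPN P T Act) (R : (P → ℕ) → (P → ℕ) → Prop) : Prop :=
  ResTransfer N R R ∧ ResTransfer N (fun a b => R b a) (fun a b => R b a)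

/-- Resource bisimilarity `≃`. -/
def ResBisim (N : LPN P T Act) (r s : P → ℕ) : Prop :=
  ∃ R, IsResBisim N R ∧ R r s

/-- Stratified bisimilarity `∼ᵢ`. -/
def Strat (N : LPN P T Act) : ℕ → (P → ℕ) → (P → ℕ) → Prop
  | 0, _, _ => True
  | i + 1, M₁, M₂ =>
      (∀ t M₁', Fires N M₁ t M₁' →
        ∃ u M₂', N.lab u = N.lab t ∧ Fires N M₂ u M₂' ∧ Strat N i M₁' M₂') ∧
      (∀ t M₂', Fires N M₂ t M₂' →
        ∃ u M₁', N.lab u = N.lab t ∧ Fires N M₁ u M₁' ∧ Strat N i M₂' M₁')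

/-- Stratified resource bisimilarity `≃ᵢ`. -/
def StratRes (N : LPN P T Act) : ℕ → (P → ℕ) → (P → ℕ) → Prop
  | 0, _, _ => True
  | i + 1, r, s =>
      (∀ t r', Fires N (fun p => r p + (N.pre t p - r p)) t r' →
        ∃ u s', N.lab u = N.lab t ∧
          Fires N (fun p => s p + (N.pre t p - r p)) u s' ∧ StratRes N i r' s') ∧
      (∀ t s', Fires N (fun p => s p + (N.pre t p - s p)) t s' →
        ∃ u r', N.lab u = N.lab t ∧
          Fires N (fun p => r p + (N.pre t p - s p)) u r' ∧ StratRes N i s' r')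

/-- The equivalence level: the largest `i` with `r ≃ᵢ s` (`⊤` = ω if all `i`). -/
noncomputable def eqlev (N : LPN P T Act) (r s : P → ℕ) : ℕ∞ :=
  sSup {n : ℕ∞ | ∃ i : ℕ, n = (i : ℕ∞) ∧ StratRes N i r s}

lemma resBisim_symm' (N : LPN P T Act) {r s : P → ℕ} (h : ResBisim N r s) :
    ResBisim N s r := by
  obtain ⟨R, ⟨h1, h2⟩, hrs⟩ := h
  exact ⟨fun a b => R b a, ⟨h2, h1⟩, hrs⟩

lemma resBisim_transfer (N : LPN P T Act) :
    ResTransfer N (ResBisim N) (ResBisim N) := by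
  rintro r s ⟨R, hR, hrs⟩ t r' hf
  obtain ⟨u, s', hlab, hfs, hR'⟩ := hR.1 r s hrs t r' hf
  exact ⟨u, s', hlab, hfs, R, hR, hR'⟩

/-- Pairs obtained by adding a common resource to resource-bisimilar pairs. -/
def AddRel (N : LPN P T Act) : (P → ℕ) → (P → ℕ) → Prop :=
  fun a b => ∃ r s w, ResBisim N r s ∧ a = r + w ∧ b = s + w

lemma addRel_symm (N : LPN P T Act) {a b : P → ℕ} (h : AddRel N a b) :
    AddRel N b a := by
  obtain ⟨r, s, w, hrs, ha, hb⟩ := h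
  exact ⟨s, r, w, resBisim_symm' N hrs, hb, ha⟩

lemma transfer_addRel (N : LPN P T Act) : ResTransfer N (AddRel N) (AddRel N) := by
  rintro a b ⟨r, s, w, hrs, rfl, rfl⟩ t a' ⟨_, rfl⟩
  obtain ⟨u, s₀', hlab, ⟨hleu, hs₀'⟩, hbis⟩ :=
    resBisim_transfer N r s hrs t
      (fun p => (r p + (N.pre t p - r p)) - N.pre t p + N.post t p)
      ⟨fun p => by dsimp; omega, rfl⟩
  subst hs₀'
  refine ⟨u, fun p => ((s + w) p + (N.pre t p - (r + w) p)) - N.pre u p + N.post u p,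
    hlab, ⟨fun p => ?_, rfl⟩, ?_⟩
  · have := hleu p; simp only [Pi.add_apply] at *; omega
  · refine ⟨_, _,
      fun p => (r p + w p + (N.pre t p - (r p + w p))) - (r p + (N.pre t p - r p)),
      hbis, funext fun p => ?_, funext fun p => ?_⟩
    · simp only [Pi.add_apply]; omega
    · have := hleu p; simp only [Pi.add_apply] at *; omega

lemma isResBisim_addRel (N : LPN P T Act) : IsResBisim N (AddRel N) := by
  refine ⟨transfer_addRel N, ?_⟩
  intro a b h t r' hf
  obtain ⟨u, s', h1, h2, h3⟩ := transfer_addRel N a b (addRel_symm N h) t r' hf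
  exact ⟨u, s', h1, h2, addRel_symm N h3⟩

lemma resBisim_add (N : LPN P T Act) {r s : P → ℕ} (h : ResBisim N r s)
    (w : P → ℕ) : ResBisim N (r + w) (s + w) :=
  ⟨AddRel N, isResBisim_addRel N, r, s, w, h, rfl, rfl⟩

/-- Resource bisimilarity is transitive; concretely the composition relation
`{(r₁,r₃) | ∃ r₂, r₁ ≃ r₂ ∧ r₂ ≃ r₃}` is a resource bisimulation. -/
theorem resBisim_trans (N : LPN P T Act) :
    IsResBisim N (fun r₁ r₃ => ∃ r₂, ResBisim N r₁ r₂ ∧ ResBisim N r₂ r₃) ∧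
      ∀ r₁ r₂ r₃ : P → ℕ, ResBisim N r₁ r₂ → ResBisim N r₂ r₃ → ResBisim N r₁ r₃ := by
  have fwd : ResTransfer N
      (fun r₁ r₃ => ∃ r₂, ResBisim N r₁ r₂ ∧ ResBisim N r₂ r₃)
      (fun r₁ r₃ => ∃ r₂, ResBisim N r₁ r₂ ∧ ResBisim N r₂ r₃) := by
    rintro a c ⟨b, hab, hbc⟩ t a' hf
    obtain ⟨u, b', hlab, hfb, hab'⟩ := resBisim_transfer N a b hab t a' hf
    have hbw := resBisim_add N hbc (fun p => N.pre t p - a p)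
    have hm : (fun p => (b + fun p => N.pre t p - a p) p +
        (N.pre u p - (b + fun p => N.pre t p - a p) p)) =
        (fun p => b p + (N.pre t p - a p)) := by
      funext p
      have := hfb.1 p
      simp only [Pi.add_apply] at *
      omega
    obtain ⟨v, c', hlabv, hfc, hb'c'⟩ :=
      resBisim_transfer N _ _ hbw u b' (by rw [hm]; exact hfb)
    refine ⟨v, c', by rw [hlabv, hlab], ?_, b', hab', hb'c'⟩
    have hm2 : (fun p => (c + fun p => N.pre t p - a p) p +
        (N.pre u p - (b + fun p => N.pre t p - a p) p)) =
        (fun p => c p + (N.pre t p - a p)) := by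
      funext p
      have := hfb.1 p
      simp only [Pi.add_apply] at *
      omega
    rwa [hm2] at hfc
  have symm : ∀ a c : P → ℕ, (∃ b, ResBisim N a b ∧ ResBisim N b c) →
      ∃ b, ResBisim N c b ∧ ResBisim N b a := by
    rintro a c ⟨b, hab, hbc⟩
    exact ⟨b, resBisim_symm' N hbc, resBisim_symm' N hab⟩
  refine ⟨⟨fwd, ?_⟩, ?_⟩
  · intro a c h t r' hf
    obtain ⟨u, s', h1, h2, h3⟩ := fwd a c (symm c a h) t r' hf
    exact ⟨u, s', h1, h2, symm _ _ h3⟩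
  · intro r₁ r₂ r₃ h12 h23
    exact ⟨fun a c => ∃ b, ResBisim N a b ∧ ResBisim N b c,
      ⟨fwd, fun a c h t r' hf => by
        obtain ⟨u, s', h1, h2, h3⟩ := fwd a c (symm c a h) t r' hf
        exact ⟨u, s', h1, h2, symm _ _ h3⟩⟩, r₂, h12, h23⟩
end

section
/- If eqlev(r', s') > eqlev(r, s), with r' ≤ r and s' ≤ s, then eqlev(r, (s − s') + r') = eqlev(r, s) (the REDUCE step preserves the equivalence level when the ancestor pair has strictly greater level). -/
variable {P T Act : Type}

lemma stratRes_succ_le (N : LPN P T Act) :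
    ∀ i r s, StratRes N (i + 1) r s → StratRes N i r s := by
  intro i
  induction i with
  | zero => intro r s _; trivial
  | succ j ih =>
    rintro r s ⟨h1, h2⟩
    refine ⟨?_, ?_⟩
    · intro t r₁ hf
      obtain ⟨u, s₁, hl, hfs, hr⟩ := h1 t r₁ hf
      exact ⟨u, s₁, hl, hfs, ih _ _ hr⟩
    · intro t s₁ hf
      obtain ⟨u, r₁, hl, hfs, hr⟩ := h2 t s₁ hf
      exact ⟨u, r₁, hl, hfs, ih _ _ hr⟩

lemma stratRes_le (N : LPN P T Act) :
    ∀ i j r s, j ≤ i → StratRes N i r s → StratRes N j r s := by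
  intro i
  induction i with
  | zero =>
    intro j r s hj hs
    have : j = 0 := Nat.le_zero.mp hj
    subst this; trivial
  | succ k ih =>
    intro j r s hj hs
    rcases Nat.lt_or_ge j (k + 1) with h' | h'
    · exact ih j r s (Nat.lt_succ_iff.mp h') (stratRes_succ_le N k r s hs)
    · have : j = k + 1 := le_antisymm hj h'
      subst this; exact hs

lemma stratRes_symm (N : LPN P T Act) :
    ∀ i r s, StratRes N i r s → StratRes N i s r := by
  intro i
  cases i with
  | zero => intro r s _; trivial
  | succ k =>
    rintro r s ⟨h1, h2⟩
    exact ⟨h2, h1⟩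

lemma stratRes_add (N : LPN P T Act) :
    ∀ i (r s w : P → ℕ), StratRes N i r s → StratRes N i (r + w) (s + w) := by
  intro i
  induction i with
  | zero => intro r s w _; trivial
  | succ k ih =>
    have half : ∀ (r s w : P → ℕ),
        (∀ t r₁, Fires N (fun p => r p + (N.pre t p - r p)) t r₁ →
          ∃ u s₁, N.lab u = N.lab t ∧
            Fires N (fun p => s p + (N.pre t p - r p)) u s₁ ∧ StratRes N k r₁ s₁) →
        ∀ t M₁', Fires N (fun p => (r + w) p + (N.pre t p - (r + w) p)) t M₁' →
          ∃ u s₁, N.lab u = N.lab t ∧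
            Fires N (fun p => (s + w) p + (N.pre t p - (r + w) p)) u s₁ ∧
            StratRes N k M₁' s₁ := by
      intro r s w hf t M₁' hfire
      have hen : Fires N (fun p => r p + (N.pre t p - r p)) t
          (fun p => (r p + (N.pre t p - r p)) - N.pre t p + N.post t p) := by
        refine ⟨fun p => ?_, rfl⟩
        show N.pre t p ≤ r p + (N.pre t p - r p)
        omega
      obtain ⟨u, s₁, hlab, hfs, hres⟩ := hf t _ hen
      obtain ⟨hle, hs₁⟩ := hfs
      refine ⟨u, s₁ + (fun p => w p - (N.pre t p - r p)), hlab, ?_, ?_⟩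
      · constructor
        · intro p
          have h1 : N.pre u p ≤ s p + (N.pre t p - r p) := hle p
          simp only [Pi.add_apply]
          omega
        · funext p
          have h1 : N.pre u p ≤ s p + (N.pre t p - r p) := hle p
          have h2 : s₁ p = (s p + (N.pre t p - r p)) - N.pre u p + N.post u p := by
            rw [hs₁]
          simp only [Pi.add_apply, h2]
          omega
      · have hM : M₁' = (fun p => (r p + (N.pre t p - r p)) - N.pre t p + N.post t p)
            + (fun p => w p - (N.pre t p - r p)) := by
          obtain ⟨_, hM⟩ := hfire
          rw [hM]; funext p
          simp only [Pi.add_apply]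
          omega
        rw [hM]
        exact ih _ _ _ hres
    rintro r s w ⟨h1, h2⟩
    exact ⟨half r s w h1, half s r w h2⟩

lemma stratRes_trans (N : LPN P T Act) :
    ∀ i r s u, StratRes N i r s → StratRes N i s u → StratRes N i r u := by
  intro i
  induction i with
  | zero => intro r s u _ _; trivial
  | succ k ih =>
    have half : ∀ (r s u : P → ℕ),
        (∀ t r₁, Fires N (fun p => r p + (N.pre t p - r p)) t r₁ →
          ∃ w s₁, N.lab w = N.lab t ∧
            Fires N (fun p => s p + (N.pre t p - r p)) w s₁ ∧ StratRes N k r₁ s₁) →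
        StratRes N (k + 1) s u →
        ∀ t r₁, Fires N (fun p => r p + (N.pre t p - r p)) t r₁ →
          ∃ w M₂, N.lab w = N.lab t ∧
            Fires N (fun p => u p + (N.pre t p - r p)) w M₂ ∧ StratRes N k r₁ M₂ := by
      intro r s u hrs1 hsu t r₁ hfire
      obtain ⟨u₁, s₁, hlab1, hfs, hres1⟩ := hrs1 t r₁ hfire
      obtain ⟨hle, hs₁⟩ := hfs
      have hadd := stratRes_add N (k + 1) s u (fun p => N.pre t p - r p) hsu
      have hfire2 : Fires N
          (fun p => (s + fun p => N.pre t p - r p) p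
            + (N.pre u₁ p - (s + fun p => N.pre t p - r p) p)) u₁ s₁ := by
        have heq : (fun p => (s + fun p => N.pre t p - r p) p
            + (N.pre u₁ p - (s + fun p => N.pre t p - r p) p))
            = fun p => s p + (N.pre t p - r p) := by
          funext p
          have h1 : N.pre u₁ p ≤ s p + (N.pre t p - r p) := hle p
          simp only [Pi.add_apply]
          omega
        rw [heq]
        exact ⟨hle, hs₁⟩
      obtain ⟨u₂, M₂, hlab2, hfu, hres2⟩ := hadd.1 u₁ s₁ hfire2
      have heq2 : (fun p => (u + fun p => N.pre t p - r p) p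
          + (N.pre u₁ p - (s + fun p => N.pre t p - r p) p))
          = fun p => u p + (N.pre t p - r p) := by
        funext p
        have h1 : N.pre u₁ p ≤ s p + (N.pre t p - r p) := hle p
        simp only [Pi.add_apply]
        omega
      rw [heq2] at hfu
      exact ⟨u₂, M₂, hlab2.trans hlab1, hfu, ih r₁ s₁ M₂ hres1 hres2⟩
    intro r s u hrs hsu
    exact ⟨half r s u hrs.1 hsu,
      half u s r hsu.2 (stratRes_symm N (k + 1) r s hrs)⟩

lemma le_eqlev (N : LPN P T Act) {i : ℕ} {r s : P → ℕ} (h : StratRes N i r s) :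
    (i : ℕ∞) ≤ eqlev N r s :=
  le_sSup ⟨i, rfl, h⟩

lemma stratRes_of_le_eqlev (N : LPN P T Act) {i : ℕ} {r s : P → ℕ}
    (h : (i : ℕ∞) ≤ eqlev N r s) : StratRes N i r s := by
  cases i with
  | zero => trivial
  | succ j =>
    by_contra hc
    have hb : eqlev N r s ≤ (j : ℕ∞) := by
      apply sSup_le
      rintro n ⟨k, rfl, hk⟩
      have hkj : k ≤ j := by
        by_contra hk2
        exact hc (stratRes_le N k (j + 1) r s (by omega) hk)
      exact_mod_cast hkj
    have h2 := h.trans hb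
    have h3 : j + 1 ≤ j := by exact_mod_cast h2
    omega

/-- The REDUCE step preserves the equivalence level: if `eqlev(r',s') > eqlev(r,s)`, with
`r' ≤ r` and `s' ≤ s`, then `eqlev(r, (s − s') + r') = eqlev(r,s)`. -/
theorem reduce_preserves_eqlev (N : LPN P T Act) (r s r' s' : P → ℕ)
    (h : eqlev N r s < eqlev N r' s') (h3 : r' ≤ r) (h4 : s' ≤ s) :
    eqlev N r ((s - s') + r') = eqlev N r s := by
  have hx : ∀ i : ℕ, StratRes N i r' s' → StratRes N i s ((s - s') + r') := by
    intro i hi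
    have h1 := stratRes_add N i r' s' (s - s') hi
    have h2 : s' + (s - s') = s := by
      funext p
      have hp : s' p ≤ s p := h4 p
      simp only [Pi.add_apply, Pi.sub_apply]
      omega
    rw [h2] at h1
    rw [show (s - s') + r' = r' + (s - s') from add_comm _ _]
    exact stratRes_symm N i _ _ h1
  have hsx : eqlev N r' s' ≤ eqlev N s ((s - s') + r') := by
    apply sSup_le
    rintro n ⟨i, rfl, hi⟩
    exact le_eqlev N (hx i hi)
  obtain ⟨m, hm⟩ : ∃ m : ℕ, eqlev N r s = (m : ℕ∞) := by
    have hne : eqlev N r s ≠ ⊤ := (lt_of_lt_of_le h le_top).ne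
    exact ⟨(eqlev N r s).toNat, (ENat.coe_toNat hne).symm⟩
  have hm1 : ((m + 1 : ℕ) : ℕ∞) ≤ eqlev N r' s' := by
    have h0 := Order.add_one_le_of_lt h
    rw [hm] at h0
    exact_mod_cast h0
  apply le_antisymm
  · apply sSup_le
    rintro n ⟨i, rfl, hix⟩
    by_contra hlt
    push_neg at hlt
    have hmi : m + 1 ≤ i := by
      rw [hm] at hlt
      exact_mod_cast hlt
    have h1 : StratRes N (m + 1) r ((s - s') + r') :=
      stratRes_le N i (m + 1) _ _ hmi hix
    have h2 : StratRes N (m + 1) s ((s - s') + r') :=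
      stratRes_of_le_eqlev N (hm1.trans hsx)
    have h3'' : StratRes N (m + 1) r s :=
      stratRes_trans N (m + 1) _ _ _ h1 (stratRes_symm N (m + 1) _ _ h2)
    have h5 := le_eqlev N h3''
    rw [hm] at h5
    have : m + 1 ≤ m := by exact_mod_cast h5
    omega
  · apply sSup_le
    rintro n ⟨i, rfl, hi⟩
    have hie : (i : ℕ∞) ≤ eqlev N r s := le_eqlev N hi
    have hsx' : StratRes N i s ((s - s') + r') :=
      stratRes_of_le_eqlev N ((hie.trans h.le).trans hsx)
    exact le_eqlev N (stratRes_trans N i _ _ _ hi hsx')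
end
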